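/- arXiv:2210.04346 — 3 statements merged into one kernel-verified Lean document; each statement's English description precedes it below -/
import Mathlib

section
/- Suppose each Schur complement U₁,…,U_N is invertible. Then H_{[1,N]} − E is invertible and its top-right W×W block factorizes as G_{[1,N]}(1;N) = (−1)^{N−1} · U₁^{−1} T₁ U₂^{−1} T₂ ⋯ U_{N−1}^{−1} T_{N−1} U_N^{−1}. -/
open Matrix

/-- The `NW × NW` block-tridiagonal matrix with diagonal blocks `V 0, …, V (N-1)`,
superdiagonal blocks `T 0, …, T (N-2)` and subdiagonal blocks their transposes. -/
def bandH (W N : ℕ) (V T : ℕ → Matrix (Fin W) (Fin W) ℝ) :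
    Matrix (Fin N × Fin W) (Fin N × Fin W) ℝ :=
  Matrix.of fun x y =>
    if (x.1 : ℕ) = (y.1 : ℕ) then V x.1 x.2 y.2
    else if (x.1 : ℕ) + 1 = (y.1 : ℕ) then T x.1 x.2 y.2
    else if (y.1 : ℕ) + 1 = (x.1 : ℕ) then T y.1 y.2 x.2
    else 0

/-- The top-right `W × W` block of a block matrix indexed by `Fin N × Fin W`. -/
def topRight (W N : ℕ) (M : Matrix (Fin N × Fin W) (Fin N × Fin W) ℝ) :
    Matrix (Fin W) (Fin W) ℝ :=
  Matrix.of fun p q =>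
    if h : 0 < N then M (⟨0, h⟩, p) (⟨N - 1, Nat.sub_lt h Nat.one_pos⟩, q) else 0

/-- The Schur complements `U₁, U₂, …` (0-based: `schurU … k` is `U_{k+1}`). -/
noncomputable def schurU (W : ℕ) (E : ℝ) (V T : ℕ → Matrix (Fin W) (Fin W) ℝ) :
    ℕ → Matrix (Fin W) (Fin W) ℝ
  | 0 => V 0 - E • 1
  | n + 1 => V (n + 1) - E • 1 - (T n)ᵀ * (schurU W E V T n)⁻¹ * T n

/-- The ordered product `U₁⁻¹ T₁ U₂⁻¹ T₂ ⋯ Uₙ⁻¹ Tₙ U_{n+1}⁻¹`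
(0-based: `schurProd … n` ends with `U_{n+1}⁻¹`). -/
noncomputable def schurProd (W : ℕ) (E : ℝ) (V T : ℕ → Matrix (Fin W) (Fin W) ℝ) :
    ℕ → Matrix (Fin W) (Fin W) ℝ
  | 0 => (schurU W E V T 0)⁻¹
  | n + 1 => schurProd W E V T n * T n * (schurU W E V T (n + 1))⁻¹

/-- The bottom-right `W × W` block of a block matrix indexed by `Fin N × Fin W`. -/
def botRight (W N : ℕ) (M : Matrix (Fin N × Fin W) (Fin N × Fin W) ℝ) :
    Matrix (Fin W) (Fin W) ℝ :=
  Matrix.of fun p q =>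
    if h : 0 < N then M (⟨N - 1, Nat.sub_lt h Nat.one_pos⟩, p)
      (⟨N - 1, Nat.sub_lt h Nat.one_pos⟩, q) else 0

/-- Equiv splitting off the last block row. -/
def be (W n : ℕ) : (Fin n × Fin W) ⊕ Fin W ≃ Fin (n+1) × Fin W where
  toFun := Sum.elim (fun p => (p.1.castSucc, p.2)) (fun w => (Fin.last n, w))
  invFun p := if h : (p.1 : ℕ) < n then Sum.inl (⟨p.1, h⟩, p.2) else Sum.inr p.2
  left_inv x := by
    rcases x with ⟨i, p⟩ | w
    · simp [Fin.castSucc, Fin.is_lt]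
    · simp [Fin.last]
  right_inv p := by
    rcases p with ⟨i, p⟩
    by_cases h : (i : ℕ) < n
    · simp [h, Fin.castSucc, Fin.ext_iff]
    · simp [h, Fin.last, Fin.ext_iff]; omega

lemma be_symm_lt {W n : ℕ} (i : Fin (n+1)) (p : Fin W) (h : (i : ℕ) < n) :
    (be W n).symm (i, p) = Sum.inl (⟨i, h⟩, p) := by
  simp [be, h]

lemma be_symm_ge {W n : ℕ} (i : Fin (n+1)) (p : Fin W) (h : ¬ (i : ℕ) < n) :
    (be W n).symm (i, p) = Sum.inr p := by
  simp [be, h]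

/-- The off-diagonal block coupling the first `n` block rows with the last one. -/
def Bmat (W n : ℕ) (T : ℕ → Matrix (Fin W) (Fin W) ℝ) :
    Matrix (Fin n × Fin W) (Fin W) ℝ :=
  Matrix.of fun p q => if (p.1 : ℕ) + 1 = n then T p.1 p.2 q else 0

lemma mul_Bmat {W m : ℕ} {α : Type*} (T : ℕ → Matrix (Fin W) (Fin W) ℝ)
    (M : Matrix α (Fin (m+1) × Fin W) ℝ) [Fintype α] (x : α) (q : Fin W) :
    (M * Bmat W (m+1) T) x q = ∑ w, M x (⟨m, Nat.lt_succ_self m⟩, w) * T m w q := by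
  rw [Matrix.mul_apply, Fintype.sum_prod_type]
  rw [Finset.sum_eq_single (⟨m, Nat.lt_succ_self m⟩ : Fin (m+1))]
  · simp [Bmat]
  · intro j _ hj
    have : (j : ℕ) ≠ m := by simp [Fin.ext_iff] at hj; omega
    simp [Bmat, this]
  · simp

lemma Bmat_t_mul {W m : ℕ} {α : Type*} (T : ℕ → Matrix (Fin W) (Fin W) ℝ)
    (M : Matrix (Fin (m+1) × Fin W) α ℝ) (p : Fin W) (y : α) :
    ((Bmat W (m+1) T)ᵀ * M) p y = ∑ w, T m w p * M (⟨m, Nat.lt_succ_self m⟩, w) y := by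
  rw [Matrix.mul_apply, Fintype.sum_prod_type]
  rw [Finset.sum_eq_single (⟨m, Nat.lt_succ_self m⟩ : Fin (m+1))]
  · simp [Bmat]
  · intro j _ hj
    have : (j : ℕ) ≠ m := by simp [Fin.ext_iff] at hj; omega
    simp [Bmat, this]
  · simp

lemma Bmat_sandwich {W m : ℕ} (T : ℕ → Matrix (Fin W) (Fin W) ℝ)
    (M : Matrix (Fin (m+1) × Fin W) (Fin (m+1) × Fin W) ℝ) :
    (Bmat W (m+1) T)ᵀ * M * Bmat W (m+1) T
      = (T m)ᵀ * botRight W (m+1) M * T m := by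
  ext p q
  rw [mul_Bmat, Matrix.mul_apply]
  refine Finset.sum_congr rfl fun w _ => ?_
  congr 1
  rw [Bmat_t_mul, Matrix.mul_apply]
  refine Finset.sum_congr rfl fun v _ => ?_
  simp [botRight]

lemma band_split {W m : ℕ} (E : ℝ) (V T : ℕ → Matrix (Fin W) (Fin W) ℝ) :
    bandH W (m+2) V T - E • 1 =
      reindex (be W (m+1)) (be W (m+1))
        (fromBlocks (bandH W (m+1) V T - E • 1) (Bmat W (m+1) T)
          (Bmat W (m+1) T)ᵀ (V (m+1) - E • 1)) := by
  ext ⟨i, p⟩ ⟨j, q⟩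
  rw [reindex_apply, submatrix_apply]
  by_cases hi : (i : ℕ) < m + 1 <;> by_cases hj : (j : ℕ) < m + 1
  · rw [be_symm_lt i p hi, be_symm_lt j q hj, fromBlocks_apply₁₁]
    simp only [bandH, Matrix.sub_apply, of_apply, Matrix.smul_apply, one_apply, smul_eq_mul,
      Prod.ext_iff, Fin.ext_iff]
  · rw [be_symm_lt i p hi, be_symm_ge j q hj, fromBlocks_apply₁₂]
    have hj' : (j : ℕ) = m + 1 := by omega
    simp only [bandH, Bmat, Matrix.sub_apply, of_apply, Matrix.smul_apply, one_apply, smul_eq_mul,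
      Prod.ext_iff, Fin.ext_iff]
    split_ifs <;> first | omega | rfl | ring1
  · rw [be_symm_ge i p hi, be_symm_lt j q hj, fromBlocks_apply₂₁]
    have hi' : (i : ℕ) = m + 1 := by omega
    simp only [bandH, Bmat, Matrix.sub_apply, of_apply, Matrix.smul_apply, one_apply, smul_eq_mul,
      transpose_apply, Prod.ext_iff, Fin.ext_iff]
    split_ifs <;> first | omega | rfl | ring1
  · rw [be_symm_ge i p hi, be_symm_ge j q hj, fromBlocks_apply₂₂]
    have hi' : (i : ℕ) = m + 1 := by omega
    have hj' : (j : ℕ) = m + 1 := by omega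
    simp only [bandH, Matrix.sub_apply, of_apply, Matrix.smul_apply, one_apply, smul_eq_mul,
      Prod.ext_iff, Fin.ext_iff, hi', hj', true_and]
    split_ifs <;> first | omega | rfl | tauto

/-- Equiv for the one-block case. -/
def e0 (W : ℕ) : Fin W ≃ Fin 1 × Fin W where
  toFun p := (0, p)
  invFun x := x.2
  left_inv p := rfl
  right_inv x := by
    rcases x with ⟨i, p⟩
    simp [Subsingleton.elim (0 : Fin 1) i]

lemma band_one {W : ℕ} (E : ℝ) (V T : ℕ → Matrix (Fin W) (Fin W) ℝ) :
    bandH W 1 V T - E • 1 = reindex (e0 W) (e0 W) (V 0 - E • 1) := by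
  ext ⟨i, p⟩ ⟨j, q⟩
  have hi : i = 0 := Subsingleton.elim i 0
  have hj : j = 0 := Subsingleton.elim j 0
  subst hi hj
  simp [bandH, e0, reindex_apply, Matrix.one_apply, Prod.ext_iff]

lemma mainLemma (W : ℕ) (E : ℝ) (V T : ℕ → Matrix (Fin W) (Fin W) ℝ) :
    ∀ m : ℕ, (∀ k, k ≤ m → IsUnit (schurU W E V T k).det) →
      IsUnit (bandH W (m+1) V T - E • 1).det ∧
      topRight W (m+1) ((bandH W (m+1) V T - E • 1)⁻¹)
        = (-1 : ℝ) ^ m • schurProd W E V T m ∧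
      botRight W (m+1) ((bandH W (m+1) V T - E • 1)⁻¹) = (schurU W E V T m)⁻¹ := by
  intro m
  induction m with
  | zero =>
    intro hU
    have h1 : bandH W 1 V T - E • 1 = reindex (e0 W) (e0 W) (schurU W E V T 0) :=
      band_one E V T
    refine ⟨?_, ?_, ?_⟩
    · rw [h1, det_reindex_self]; exact hU 0 le_rfl
    · rw [h1, inv_reindex]
      ext p q
      simp [topRight, reindex_apply, e0, schurProd, pow_zero]
    · rw [h1, inv_reindex]
      ext p q
      simp [botRight, reindex_apply, e0]
  | succ m IH =>
    intro hU
    obtain ⟨hdet, htop, hbot⟩ := IH (fun k hk => hU k (le_trans hk (Nat.le_succ m)))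
    set A := bandH W (m+1) V T - E • 1 with hA
    set B := Bmat W (m+1) T with hB
    set D := V (m+1) - E • (1 : Matrix (Fin W) (Fin W) ℝ) with hD
    haveI invA : Invertible A := A.invertibleOfIsUnitDet hdet
    have hSchur : D - Bᵀ * ⅟A * B = schurU W E V T (m+1) := by
      rw [invOf_eq_nonsing_inv, Bmat_sandwich, hbot]
      rfl
    haveI invS0 : Invertible (schurU W E V T (m+1)) :=
      (schurU W E V T (m+1)).invertibleOfIsUnitDet (hU (m+1) le_rfl)
    haveI invS : Invertible (D - Bᵀ * ⅟A * B) := hSchur ▸ invS0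
    haveI invFB : Invertible (fromBlocks A B Bᵀ D) := fromBlocks₁₁Invertible A B Bᵀ D
    have hS' : ⅟(D - Bᵀ * ⅟A * B) = (schurU W E V T (m+1))⁻¹ := by
      rw [invOf_eq_nonsing_inv, hSchur]
    have hsplit : bandH W (m+2) V T - E • 1
        = reindex (be W (m+1)) (be W (m+1)) (fromBlocks A B Bᵀ D) := band_split E V T
    have hdet2 : IsUnit (bandH W (m+2) V T - E • 1).det := by
      rw [hsplit, det_reindex_self, det_fromBlocks₁₁]
      exact hdet.mul (hSchur ▸ hU (m+1) le_rfl)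
    have hinv : (bandH W (m+2) V T - E • 1)⁻¹
        = reindex (be W (m+1)) (be W (m+1)) ((fromBlocks A B Bᵀ D)⁻¹) := by
      rw [hsplit, inv_reindex]
    have hFBinv : (fromBlocks A B Bᵀ D)⁻¹
        = fromBlocks (⅟A + ⅟A * B * ⅟(D - Bᵀ * ⅟A * B) * Bᵀ * ⅟A)
            (-(⅟A * B * ⅟(D - Bᵀ * ⅟A * B)))
            (-(⅟(D - Bᵀ * ⅟A * B) * Bᵀ * ⅟A)) (⅟(D - Bᵀ * ⅟A * B)) := by
      rw [← invOf_eq_nonsing_inv]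
      exact invOf_fromBlocks₁₁_eq A B Bᵀ D
    refine ⟨hdet2, ?_, ?_⟩
    · -- top-right block
      ext p q
      have h0 : (0:ℕ) < m + 2 := Nat.succ_pos _
      rw [topRight, Matrix.of_apply, dif_pos h0, hinv, reindex_apply, submatrix_apply]
      have e1 : (be W (m+1)).symm ((⟨0, h0⟩ : Fin (m+2)), p)
          = Sum.inl ((⟨0, Nat.succ_pos m⟩ : Fin (m+1)), p) := be_symm_lt _ _ (Nat.succ_pos m)
      have e2 : (be W (m+1)).symm ((⟨m + 2 - 1, Nat.sub_lt h0 Nat.one_pos⟩ : Fin (m+2)), q)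
          = Sum.inr q := be_symm_ge _ _ (by simp)
      rw [e1, e2, hFBinv, fromBlocks_apply₁₂]
      have hAB : ∀ w, (⅟A * B) ((⟨0, Nat.succ_pos m⟩ : Fin (m+1)), p) w
          = (topRight W (m+1) A⁻¹ * T m) p w := by
        intro w
        rw [invOf_eq_nonsing_inv, mul_Bmat, Matrix.mul_apply]
        refine Finset.sum_congr rfl fun v _ => ?_
        simp [topRight]
      have : (⅟A * B * ⅟(D - Bᵀ * ⅟A * B)) ((⟨0, Nat.succ_pos m⟩ : Fin (m+1)), p) q
          = (topRight W (m+1) A⁻¹ * T m * (schurU W E V T (m+1))⁻¹) p q := by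
        rw [Matrix.mul_apply, Matrix.mul_apply]
        refine Finset.sum_congr rfl fun w _ => ?_
        rw [hAB w, hS']
      rw [Matrix.neg_apply, this, htop]
      show -(((-1:ℝ) ^ m • schurProd W E V T m * T m * (schurU W E V T (m+1))⁻¹) p q)
        = ((-1:ℝ) ^ (m+1) • schurProd W E V T (m+1)) p q
      simp only [schurProd, smul_mul_assoc, Matrix.smul_apply, smul_eq_mul, pow_succ]
      ring
    · -- bottom-right block
      ext p q
      have h0 : (0:ℕ) < m + 2 := Nat.succ_pos _
      rw [botRight, Matrix.of_apply, dif_pos h0, hinv, reindex_apply, submatrix_apply]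
      have e2 : ∀ r : Fin W, (be W (m+1)).symm ((⟨m + 2 - 1, Nat.sub_lt h0 Nat.one_pos⟩ : Fin (m+2)), r)
          = Sum.inr r := fun r => be_symm_ge _ _ (by simp)
      rw [e2 p, e2 q, hFBinv, fromBlocks_apply₂₂, hS']

/-- Factorization of the Green function edge-to-edge block: if all Schur complements
`U₁, …, U_N` are invertible, then `H_{[1,N]} - E` is invertible and
`G_{[1,N]}(1;N) = (-1)^{N-1} U₁⁻¹ T₁ U₂⁻¹ T₂ ⋯ U_{N-1}⁻¹ T_{N-1} U_N⁻¹`. -/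
theorem statement4 (W N : ℕ) (hN : 1 ≤ N) (E : ℝ) (V T : ℕ → Matrix (Fin W) (Fin W) ℝ)
    (hsymm : ∀ k, (V k).IsSymm)
    (hU : ∀ k, k < N → IsUnit (schurU W E V T k).det) :
    IsUnit (bandH W N V T - E • (1 : Matrix (Fin N × Fin W) (Fin N × Fin W) ℝ)).det ∧
    topRight W N ((bandH W N V T - E • (1 : Matrix (Fin N × Fin W) (Fin N × Fin W) ℝ))⁻¹)
      = (-1 : ℝ) ^ (N - 1) • schurProd W E V T (N - 1) := by
  obtain ⟨m, rfl⟩ : ∃ m, N = m + 1 := ⟨N - 1, by omega⟩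
  obtain ⟨h1, h2, _⟩ := mainLemma W E V T m (fun k hk => hU k (by omega))
  exact ⟨h1, by simpa using h2⟩
end

section
/- Let η be a real random variable with mean 𝔞 = E[η] and variance σ² = Var(η) > 0, and suppose there is H > 0 such that |E[(η − 𝔞)ⁿ]| ≤ n! σ² H^{n−2} for every integer n ≥ 2. Then there is an absolute constant c > 0 (independent of η, σ, H) such that for every real t with |t| ≤ c min(H^{−1}, σ^{−1}), the exponential moments are finite and (E[e^{tη}])² ≤ E[e^{2tη}] · (1 − t²σ²/4). -/
open MeasureTheory ProbabilityTheory

set_option maxHeartbeats 1000000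

lemma key_est {Ω : Type} [MeasureSpace Ω] (hP : IsProbabilityMeasure (ℙ : Measure Ω))
    (ξ : Ω → ℝ) (V H : ℝ) (hH : 0 < H) (hV : 0 < V)
    (hint : ∀ n : ℕ, Integrable (fun ω => ξ ω ^ n) ℙ)
    (h0 : (∫ ω, ξ ω) = 0) (h2 : (∫ ω, ξ ω ^ 2) = V)
    (hmom : ∀ m : ℕ, |∫ ω, ξ ω ^ (m + 2)| ≤ ((m + 2).factorial : ℝ) * V * H ^ m)
    (u : ℝ) (hu : |u| * H ≤ 1 / 4) :
    Integrable (fun ω => Real.exp (u * ξ ω)) ℙ ∧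
      |(∫ ω, Real.exp (u * ξ ω)) - (1 + u ^ 2 * V / 2)| ≤ 2 * V * u ^ 2 * (|u| * H) := by
  have hξ : Integrable ξ ℙ := by simpa using hint 1
  have hsqV : (0:ℝ) < Real.sqrt V := Real.sqrt_pos.mpr hV
  have hmom_le : ∀ m : ℕ, (∫ ω, ξ ω ^ (m + 2)) ≤ ((m + 2).factorial : ℝ) * V * H ^ m :=
    fun m => (le_abs_self _).trans (hmom m)
  -- absolute moments
  have habs : ∀ m : ℕ, (∫ ω, |ξ ω| ^ (m + 2))
      ≤ 2 ^ (m + 2) * (((m + 2).factorial : ℝ) * V * H ^ m) := by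
    intro m
    have htriv : (0:ℝ) ≤ ((m + 2).factorial : ℝ) * V * H ^ m := by positivity
    have hone : (1:ℝ) ≤ 2 ^ (m + 2) := one_le_pow₀ (by norm_num)
    rcases Nat.even_or_odd m with hm | hm
    · have he : Even (m + 2) := by rcases hm with ⟨k, hk⟩; exact ⟨k + 1, by omega⟩
      have heq : (∫ ω, |ξ ω| ^ (m + 2)) = ∫ ω, ξ ω ^ (m + 2) := by
        congr 1; funext ω; exact he.pow_abs _
      rw [heq]
      calc (∫ ω, ξ ω ^ (m + 2)) ≤ ((m + 2).factorial : ℝ) * V * H ^ m := hmom_le m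
        _ ≤ 2 ^ (m + 2) * (((m + 2).factorial : ℝ) * V * H ^ m) :=
          le_mul_of_one_le_left htriv hone
    · obtain ⟨i, hi⟩ := hm
      subst hi
      -- pointwise : 2*H*|x|^(2i+3) ≤ H^2 * x^(2i+2) + x^(2i+4)
      have hpt : ∀ x : ℝ, 2 * H * |x| ^ (2 * i + 1 + 2)
          ≤ H ^ 2 * x ^ (2 * i + 2) + x ^ (2 * i + 4) := by
        intro x
        have hev1 : Even (2 * i + 2) := ⟨i + 1, by omega⟩
        have hev2 : Even (2 * i + 4) := ⟨i + 2, by omega⟩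
        have he1 : x ^ (2 * i + 2) = |x| ^ (2 * i + 2) := (Even.pow_abs hev1 x).symm
        have he2 : x ^ (2 * i + 4) = |x| ^ (2 * i + 4) := (Even.pow_abs hev2 x).symm
        rw [he1, he2]
        have e1 : |x| ^ (2 * i + 1 + 2) = |x| ^ (2 * i + 2) * |x| := by ring
        have e2 : |x| ^ (2 * i + 4) = |x| ^ (2 * i + 2) * |x| ^ 2 := by ring
        rw [e1, e2]
        have hp : (0 : ℝ) ≤ |x| ^ (2 * i + 2) := by positivity
        nlinarith [mul_nonneg hp (sq_nonneg (|x| - H))]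
      have hintL : Integrable (fun ω => 2 * H * |ξ ω| ^ (2 * i + 1 + 2)) ℙ := by
        have := ((hint (2 * i + 1 + 2)).abs.const_mul (2 * H))
        simpa [abs_pow] using this
      have hintR : Integrable (fun ω => H ^ 2 * ξ ω ^ (2 * i + 2) + ξ ω ^ (2 * i + 4)) ℙ :=
        ((hint (2 * i + 2)).const_mul (H ^ 2)).add (hint (2 * i + 4))
      have hle := integral_mono hintL hintR (fun ω => hpt (ξ ω))
      rw [integral_const_mul, integral_add ((hint (2 * i + 2)).const_mul (H ^ 2)) (hint (2 * i + 4)),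
        integral_const_mul] at hle
      have b1 : (∫ ω, ξ ω ^ (2 * i + 2)) ≤ ((2 * i + 2).factorial : ℝ) * V * H ^ (2 * i) := by
        simpa using hmom_le (2 * i)
      have b2 : (∫ ω, ξ ω ^ (2 * i + 4)) ≤ ((2 * i + 4).factorial : ℝ) * V * H ^ (2 * i + 2) := by
        simpa [show 2 * i + 2 + 2 = 2 * i + 4 by omega] using hmom_le (2 * i + 2)
      have hfacsum : ((2 * i + 2).factorial : ℝ) + ((2 * i + 4).factorial : ℝ)
          ≤ 2 * (2 ^ (2 * i + 1 + 2) * ((2 * i + 1 + 2).factorial : ℝ)) := by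
        have f1 : ((2 * i + 2).factorial : ℝ) ≤ ((2 * i + 3).factorial : ℝ) := by
          exact_mod_cast Nat.factorial_le (by omega)
        have f2 : ((2 * i + 4).factorial : ℝ) = (2 * i + 4) * ((2 * i + 3).factorial : ℝ) := by
          rw [show (2 * i + 4) = (2 * i + 3) + 1 by omega, Nat.factorial_succ]; push_cast; ring
        have f3 : ((2 * i + 4 : ℕ) : ℝ) ≤ 2 ^ (2 * i + 3) := by
          have : (2 * i + 4 : ℕ) ≤ 2 ^ (2 * i + 3) := by
            have := @Nat.lt_two_pow_self (2 * i + 3); omega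
          exact_mod_cast this
        have hfp : (0:ℝ) < ((2 * i + 3).factorial : ℝ) := by
          exact_mod_cast Nat.factorial_pos _
        have hop : (1:ℝ) ≤ 2 ^ (2 * i + 3) := one_le_pow₀ (by norm_num)
        have : ((2 * i + 1 + 2).factorial : ℝ) = ((2 * i + 3).factorial : ℝ) := by norm_num
        have hee : (2:ℝ) ^ (2 * i + 1 + 2) = 2 ^ (2 * i + 3) := by norm_num
        rw [this, f2, hee]
        push_cast at f3
        have p1 := mul_le_mul_of_nonneg_right f3 hfp.le
        have p2 := le_mul_of_one_le_left hfp.le hop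
        linarith [f1, p1, p2]
      -- combine
      have hHpos : (0:ℝ) < 2 * H := by linarith
      have key : 2 * H * (∫ ω, |ξ ω| ^ (2 * i + 1 + 2))
          ≤ 2 * H * (2 ^ (2 * i + 1 + 2) * (((2 * i + 1 + 2).factorial : ℝ) * V * H ^ (2 * i + 1))) := by
        refine hle.trans ?_
        have e1 : H ^ 2 * (((2 * i + 2).factorial : ℝ) * V * H ^ (2 * i))
            = V * H ^ (2 * i + 2) * ((2 * i + 2).factorial : ℝ) := by ring
        have e2 : ((2 * i + 4).factorial : ℝ) * V * H ^ (2 * i + 2)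
            = V * H ^ (2 * i + 2) * ((2 * i + 4).factorial : ℝ) := by ring
        have e3 : 2 * H * (2 ^ (2 * i + 1 + 2) * (((2 * i + 1 + 2).factorial : ℝ) * V * H ^ (2 * i + 1)))
            = V * H ^ (2 * i + 2) * (2 * (2 ^ (2 * i + 1 + 2) * ((2 * i + 1 + 2).factorial : ℝ))) := by
          ring
        have hcoef : (0:ℝ) ≤ V * H ^ (2 * i + 2) := by positivity
        calc H ^ 2 * (∫ ω, ξ ω ^ (2 * i + 2)) + (∫ ω, ξ ω ^ (2 * i + 4))
            ≤ H ^ 2 * (((2 * i + 2).factorial : ℝ) * V * H ^ (2 * i))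
              + ((2 * i + 4).factorial : ℝ) * V * H ^ (2 * i + 2) := by
              have := mul_le_mul_of_nonneg_left b1 (sq_nonneg H)
              linarith
          _ = V * H ^ (2 * i + 2) * (((2 * i + 2).factorial : ℝ) + ((2 * i + 4).factorial : ℝ)) := by
              rw [e1, e2]; ring
          _ ≤ V * H ^ (2 * i + 2) * (2 * (2 ^ (2 * i + 1 + 2) * ((2 * i + 1 + 2).factorial : ℝ))) :=
              mul_le_mul_of_nonneg_left hfacsum hcoef
          _ = 2 * H * (2 ^ (2 * i + 1 + 2) * (((2 * i + 1 + 2).factorial : ℝ) * V * H ^ (2 * i + 1))) := by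
              rw [e3]
      exact le_of_mul_le_mul_left key hHpos
  -- first absolute moment
  have habs1 : (∫ ω, |ξ ω|) ≤ Real.sqrt V := by
    have hptw : ∀ x : ℝ, 2 * Real.sqrt V * |x| ≤ x ^ 2 + V := by
      intro x
      have h1 : Real.sqrt V ^ 2 = V := Real.sq_sqrt hV.le
      have h2 : x ^ 2 = |x| ^ 2 := (sq_abs x).symm
      nlinarith [sq_nonneg (|x| - Real.sqrt V)]
    have hintL : Integrable (fun ω => 2 * Real.sqrt V * |ξ ω|) ℙ := hξ.abs.const_mul _
    have hintR : Integrable (fun ω => ξ ω ^ 2 + V) ℙ := (hint 2).add (integrable_const V)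
    have hle := integral_mono hintL hintR (fun ω => hptw (ξ ω))
    rw [integral_const_mul, integral_add (hint 2) (integrable_const V), h2, integral_const] at hle
    simp only [measure_univ, ENNReal.toReal_one, probReal_univ, smul_eq_mul, one_mul] at hle
    have h1 : Real.sqrt V * Real.sqrt V = V := Real.mul_self_sqrt hV.le
    nlinarith [hle]
  -- the series terms
  set f : ℕ → Ω → ℝ := fun n ω => u ^ n * ξ ω ^ n / n.factorial with hf
  have hf_int : ∀ n, Integrable (f n) ℙ := fun n => ((hint n).const_mul _).div_const _
  have hf_meas : ∀ n, AEStronglyMeasurable (f n) ℙ := fun n => (hf_int n).aestronglyMeasurable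
  have hnorm_eq : ∀ n, (∫ ω, ‖f n ω‖) = |u| ^ n * (∫ ω, |ξ ω| ^ n) / n.factorial := by
    intro n
    simp only [hf, Real.norm_eq_abs, abs_div, abs_mul, abs_pow, Nat.abs_cast]
    rw [integral_div, integral_const_mul]
  -- bound on norms of integrals
  have hbound : ∀ m : ℕ, (∫ ω, ‖f (m + 2) ω‖) ≤ 4 * V * u ^ 2 * (2 * |u| * H) ^ m := by
    intro m
    rw [hnorm_eq]
    have hfp : (0:ℝ) < ((m + 2).factorial : ℝ) := by exact_mod_cast Nat.factorial_pos _
    have h1 : |u| ^ (m + 2) * (∫ ω, |ξ ω| ^ (m + 2))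
        ≤ |u| ^ (m + 2) * (2 ^ (m + 2) * (((m + 2).factorial : ℝ) * V * H ^ m)) :=
      mul_le_mul_of_nonneg_left (habs m) (by positivity)
    rw [div_le_iff₀ hfp]
    refine h1.trans (le_of_eq ?_)
    have e1 : |u| ^ (m + 2) = |u| ^ m * u ^ 2 := by rw [pow_add, sq_abs]
    have e2 : (2:ℝ) ^ (m + 2) = 2 ^ m * 4 := by rw [pow_add]; norm_num
    rw [e1, e2, show (2 * |u| * H) ^ m = 2 ^ m * |u| ^ m * H ^ m by rw [mul_pow, mul_pow]]
    ring
  have hgeo : (0:ℝ) ≤ 2 * |u| * H ∧ 2 * |u| * H < 1 := by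
    constructor
    · positivity
    · nlinarith [abs_nonneg u]
  -- summability of integrals of norms
  have hsummable : Summable (fun n => ∫ ω, ‖f n ω‖) := by
    rw [← summable_nat_add_iff 2]
    refine Summable.of_nonneg_of_le (fun n => integral_nonneg fun ω => norm_nonneg _)
      (fun n => hbound n) ?_
    exact (summable_geometric_of_lt_one hgeo.1 hgeo.2).mul_left _
  have hnn : ∀ n, (0:ℝ) ≤ ∫ ω, ‖f n ω‖ := fun n => integral_nonneg fun ω => norm_nonneg _
  have hlint : (∑' n, ∫⁻ ω, ‖f n ω‖₊ ∂ℙ) ≠ ⊤ := by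
    have : ∀ n, (∫⁻ ω, ‖f n ω‖₊ ∂ℙ) = ENNReal.ofReal (∫ ω, ‖f n ω‖) := fun n =>
      (ofReal_integral_norm_eq_lintegral_enorm (hf_int n)).symm
    simp_rw [this]
    rw [← ENNReal.ofReal_tsum_of_nonneg hnn hsummable]
    exact ENNReal.ofReal_ne_top
  -- pointwise expansion of exp
  have hsum_pt : ∀ ω, Summable (fun n => f n ω) := by
    intro ω
    have := Real.summable_pow_div_factorial (u * ξ ω)
    refine this.congr fun n => ?_
    simp [hf, mul_pow]
  have hsum_abs_pt : ∀ ω, Summable (fun n => |f n ω|) := by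
    intro ω
    have := Real.summable_pow_div_factorial (|u * ξ ω|)
    refine this.congr fun n => ?_
    simp [hf, abs_div, abs_mul, abs_pow, mul_pow]
  have hexp_eq : ∀ ω, Real.exp (u * ξ ω) = ∑' n, f n ω := by
    intro ω
    have hE : Real.exp (u * ξ ω) = ∑' n : ℕ, (u * ξ ω) ^ n / n.factorial := by
      rw [Real.exp_eq_exp_ℝ, NormedSpace.exp_eq_tsum_div]
    rw [hE]
    congr 1; funext n; simp [hf, mul_pow]
  -- integrability of exp
  have hintexp : Integrable (fun ω => Real.exp (u * ξ ω)) ℙ := by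
    constructor
    · exact (Real.continuous_exp.comp_aestronglyMeasurable
        (hξ.aestronglyMeasurable.const_mul u))
    · show (∫⁻ ω, ‖Real.exp (u * ξ ω)‖₊ ∂ℙ) < ⊤
      have hpt : ∀ ω, (‖Real.exp (u * ξ ω)‖₊ : ENNReal) ≤ ∑' n, (‖f n ω‖₊ : ENNReal) := by
        intro ω
        rw [show (‖Real.exp (u * ξ ω)‖₊ : ENNReal) = ENNReal.ofReal (Real.exp (u * ξ ω)) from Real.enorm_eq_ofReal (Real.exp_nonneg _)]
        have h1 : Real.exp (u * ξ ω) ≤ ∑' n, |f n ω| := by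
          rw [hexp_eq ω]
          exact Summable.tsum_le_tsum (fun n => le_abs_self _) (hsum_pt ω) (hsum_abs_pt ω)
        refine le_trans (ENNReal.ofReal_le_ofReal h1) ?_
        rw [ENNReal.ofReal_tsum_of_nonneg (fun n => abs_nonneg _) (hsum_abs_pt ω)]
        refine le_of_eq ?_
        congr 1; funext n
        rw [← Real.norm_eq_abs, ofReal_norm]; rfl
      calc (∫⁻ ω, ‖Real.exp (u * ξ ω)‖₊ ∂ℙ) ≤ ∫⁻ ω, ∑' n, (‖f n ω‖₊ : ENNReal) ∂ℙ :=
            lintegral_mono hpt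
        _ = ∑' n, ∫⁻ ω, (‖f n ω‖₊ : ENNReal) ∂ℙ :=
            lintegral_tsum (fun n => (hf_meas n).enorm)
        _ < ⊤ := lt_top_iff_ne_top.mpr hlint
  refine ⟨hintexp, ?_⟩
  -- integral expansion
  have hint_eq : (∫ ω, Real.exp (u * ξ ω)) = ∑' n, ∫ ω, f n ω := by
    rw [show (fun ω => Real.exp (u * ξ ω)) = fun ω => ∑' n, f n ω from funext hexp_eq]
    exact integral_tsum hf_meas hlint
  have hSint : Summable (fun n => ∫ ω, f n ω) :=
    Summable.of_norm_bounded hsummable (fun n => norm_integral_le_integral_norm _)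
  have I0 : (∫ ω, f 0 ω) = 1 := by
    simp [hf]
  have I1 : (∫ ω, f 1 ω) = 0 := by
    simp only [hf, pow_one, Nat.factorial_one, Nat.cast_one, div_one]
    rw [integral_const_mul, h0, mul_zero]
  have I2 : (∫ ω, f 2 ω) = u ^ 2 * V / 2 := by
    simp only [hf, Nat.factorial_two, Nat.cast_ofNat]
    rw [integral_div, integral_const_mul, h2]
  have hsplit := Summable.sum_add_tsum_nat_add 3 hSint
  have hsum3 : (∑ n ∈ Finset.range 3, ∫ ω, f n ω) = 1 + u ^ 2 * V / 2 := by
    rw [Finset.sum_range_succ, Finset.sum_range_succ, Finset.sum_range_one, I0, I1, I2]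
    ring
  have hrem : (∫ ω, Real.exp (u * ξ ω)) - (1 + u ^ 2 * V / 2) = ∑' n, ∫ ω, f (n + 3) ω := by
    rw [hint_eq, ← hsplit, hsum3]; ring
  rw [hrem]
  -- bound the tail
  have htail_term : ∀ n : ℕ, |∫ ω, f (n + 3) ω| ≤ V * u ^ 2 * (|u| * H) ^ (n + 1) := by
    intro n
    have h1 : |∫ ω, f (n + 3) ω| = |u| ^ (n + 3) * |∫ ω, ξ ω ^ (n + 3)| / ((n + 3).factorial : ℝ) := by
      simp only [hf]
      rw [integral_div, integral_const_mul, abs_div, abs_mul, abs_pow, Nat.abs_cast]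
    rw [h1]
    have hfp : (0:ℝ) < ((n + 3).factorial : ℝ) := by exact_mod_cast Nat.factorial_pos _
    rw [div_le_iff₀ hfp]
    have h2 : |∫ ω, ξ ω ^ (n + 3)| ≤ ((n + 3).factorial : ℝ) * V * H ^ (n + 1) := by
      simpa [show n + 1 + 2 = n + 3 by omega] using hmom (n + 1)
    calc |u| ^ (n + 3) * |∫ ω, ξ ω ^ (n + 3)|
        ≤ |u| ^ (n + 3) * (((n + 3).factorial : ℝ) * V * H ^ (n + 1)) :=
          mul_le_mul_of_nonneg_left h2 (by positivity)
      _ = V * u ^ 2 * (|u| * H) ^ (n + 1) * ((n + 3).factorial : ℝ) := by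
          rw [mul_pow, show |u| ^ (n + 3) = |u| ^ 2 * |u| ^ (n + 1) by ring, sq_abs]
          ring
  have hgeo2 : (0:ℝ) ≤ |u| * H ∧ |u| * H < 1 := ⟨by positivity, by linarith⟩
  have htail_sum : Summable (fun n : ℕ => V * u ^ 2 * (|u| * H) ^ (n + 1)) := by
    have := (summable_geometric_of_lt_one hgeo2.1 hgeo2.2).mul_left (V * u ^ 2 * (|u| * H))
    refine this.congr fun n => ?_
    rw [pow_succ']
    ring
  have habs_sum : Summable (fun n => |∫ ω, f (n + 3) ω|) :=
    Summable.of_nonneg_of_le (fun n => abs_nonneg _) htail_term htail_sum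
  have hns : Summable (fun n => ‖∫ ω, f (n + 3) ω‖) := by
    simpa [Real.norm_eq_abs] using habs_sum
  have hstep1 : |∑' n, ∫ ω, f (n + 3) ω| ≤ ∑' n, |∫ ω, f (n + 3) ω| := by
    simpa [Real.norm_eq_abs] using norm_tsum_le_tsum_norm hns
  calc |∑' n, ∫ ω, f (n + 3) ω| ≤ ∑' n, |∫ ω, f (n + 3) ω| := hstep1
    _ ≤ ∑' n : ℕ, V * u ^ 2 * (|u| * H) ^ (n + 1) := Summable.tsum_le_tsum htail_term habs_sum htail_sum
    _ ≤ 2 * V * u ^ 2 * (|u| * H) := by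
        have heq : (∑' n : ℕ, V * u ^ 2 * (|u| * H) ^ (n + 1))
            = V * u ^ 2 * (|u| * H) * (1 - |u| * H)⁻¹ := by
          rw [← tsum_geometric_of_lt_one hgeo2.1 hgeo2.2, ← tsum_mul_left]
          congr 1; funext n; rw [pow_succ']; ring
        rw [heq]
        have hinv : (1 - |u| * H)⁻¹ ≤ 2 := by
          rw [inv_le_comm₀ (by linarith) (by norm_num)]
          linarith
        have : V * u ^ 2 * (|u| * H) * (1 - |u| * H)⁻¹ ≤ V * u ^ 2 * (|u| * H) * 2 :=
          mul_le_mul_of_nonneg_left hinv (by positivity)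
        linarith



/-- Exponential-moment comparison under a Bernstein-type moment condition: if
`|E[(η - 𝔞)ⁿ]| ≤ n! σ² H^{n-2}` for all `n ≥ 2`, then for `|t| ≤ c min(H⁻¹, σ⁻¹)`
(with an absolute constant `c > 0`) the exponential moments are finite and
`(E[e^{tη}])² ≤ E[e^{2tη}] (1 - t²σ²/4)`. -/
theorem statement18 :
    ∃ c : ℝ, 0 < c ∧
      ∀ (Ω : Type) [MeasureSpace Ω], IsProbabilityMeasure (ℙ : Measure Ω) →
      ∀ (η : Ω → ℝ) (H : ℝ), 0 < H →
        Integrable η ℙ →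
        0 < variance η ℙ →
        (∀ n : ℕ, 2 ≤ n → Integrable (fun ω => (η ω - ∫ ω', η ω') ^ n) ℙ) →
        (∀ n : ℕ, 2 ≤ n →
          |∫ ω, (η ω - ∫ ω', η ω') ^ n|
            ≤ (n.factorial : ℝ) * variance η ℙ * H ^ (n - 2)) →
        ∀ t : ℝ, |t| ≤ c * min H⁻¹ (Real.sqrt (variance η ℙ))⁻¹ →
          Integrable (fun ω => Real.exp (t * η ω)) ℙ ∧
          Integrable (fun ω => Real.exp (2 * t * η ω)) ℙ ∧
          (∫ ω, Real.exp (t * η ω)) ^ 2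
            ≤ (∫ ω, Real.exp (2 * t * η ω)) * (1 - t ^ 2 * variance η ℙ / 4) := by
  refine ⟨1/100, by norm_num, ?_⟩
  intro Ω _ hP η H hH hη hVar hIntPow hMom t ht
  haveI := hP
  set V := variance η ℙ with hV
  set 𝔞 := ∫ ω', η ω' with h𝔞
  set ξ : Ω → ℝ := fun ω => η ω - 𝔞 with hξdef
  have hsqV : (0:ℝ) < Real.sqrt V := Real.sqrt_pos.mpr hVar
  have hint : ∀ n : ℕ, Integrable (fun ω => ξ ω ^ n) ℙ := by
    intro n
    match n with
    | 0 => simpa using integrable_const (1:ℝ)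
    | 1 =>
      have h1 : Integrable (fun ω => η ω - 𝔞) ℙ := hη.sub (integrable_const 𝔞)
      simpa [hξdef] using h1
    | (m+2) => exact hIntPow (m+2) (by omega)
  have h0 : (∫ ω, ξ ω) = 0 := by
    simp only [hξdef]
    rw [integral_sub hη (integrable_const 𝔞), integral_const]
    simp [h𝔞]
  have hMemξ : MemLp ξ 2 ℙ := by
    refine (memLp_two_iff_integrable_sq ?_).mpr ?_
    · exact (hη.sub (integrable_const 𝔞)).aestronglyMeasurable
    · exact hIntPow 2 le_rfl
  have hMem : MemLp η 2 ℙ := by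
    have := hMemξ.add (memLp_const 𝔞)
    have heq : (ξ + fun _ => 𝔞) = η := by funext ω; simp [hξdef]
    rwa [heq] at this
  have h2 : (∫ ω, ξ ω ^ 2) = V := by
    rw [hV, variance_eq_integral hMem.aemeasurable]
  have hmom' : ∀ m : ℕ, |∫ ω, ξ ω ^ (m + 2)| ≤ ((m + 2).factorial : ℝ) * V * H ^ m := by
    intro m
    simpa using hMom (m+2) (by omega)
  have htH : |t| * H ≤ 1/100 := by
    have h1 : |t| ≤ 1/100 * H⁻¹ :=
      le_trans ht (mul_le_mul_of_nonneg_left (min_le_left _ _) (by norm_num))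
    have := mul_le_mul_of_nonneg_right h1 hH.le
    rwa [mul_assoc, inv_mul_cancel₀ hH.ne', mul_one] at this
  have htV : |t| * Real.sqrt V ≤ 1/100 := by
    have h1 : |t| ≤ 1/100 * (Real.sqrt V)⁻¹ :=
      le_trans ht (mul_le_mul_of_nonneg_left (min_le_right _ _) (by norm_num))
    have := mul_le_mul_of_nonneg_right h1 hsqV.le
    rwa [mul_assoc, inv_mul_cancel₀ hsqV.ne', mul_one] at this
  have hw0 : (0:ℝ) ≤ t^2 * V := mul_nonneg (sq_nonneg t) hVar.le
  have hwle : t^2 * V ≤ 1/10000 := by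
    have h1 : (|t| * Real.sqrt V) * (|t| * Real.sqrt V) ≤ (1/100) * (1/100) :=
      mul_self_le_mul_self (by positivity) htV
    have h2' : (|t| * Real.sqrt V) * (|t| * Real.sqrt V) = t^2 * V := by
      rw [show (|t| * Real.sqrt V) * (|t| * Real.sqrt V)
          = (|t| * |t|) * (Real.sqrt V * Real.sqrt V) by ring,
        abs_mul_abs_self, Real.mul_self_sqrt hVar.le]
      ring
    rw [h2'] at h1
    linarith
  obtain ⟨hI1, hB1⟩ := key_est hP ξ V H hH hVar hint h0 h2 hmom' t (by linarith)
  obtain ⟨hI2, hB2⟩ := key_est hP ξ V H hH hVar hint h0 h2 hmom' (2*t)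
    (by rw [abs_mul, abs_two]; linarith)
  have heq1 : (fun ω => Real.exp (t * η ω)) = fun ω => Real.exp (t * 𝔞) * Real.exp (t * ξ ω) := by
    funext ω
    rw [← Real.exp_add]
    congr 1
    simp [hξdef]
    ring
  have heq2 : (fun ω => Real.exp (2 * t * η ω))
      = fun ω => Real.exp (2 * t * 𝔞) * Real.exp (2 * t * ξ ω) := by
    funext ω
    rw [← Real.exp_add]
    congr 1
    simp [hξdef]
    ring
  refine ⟨by rw [heq1]; exact hI1.const_mul _, by rw [heq2]; exact hI2.const_mul _, ?_⟩
  rw [heq1, heq2, integral_const_mul, integral_const_mul]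
  set A := ∫ ω, Real.exp (t * ξ ω) with hA
  set B := ∫ ω, Real.exp (2 * t * ξ ω) with hB
  -- clean up the estimates
  have hub1 : 2 * V * t ^ 2 * (|t| * H) ≤ (1/50) * (t^2 * V) := by
    calc 2 * V * t ^ 2 * (|t| * H) = 2 * (t^2 * V) * (|t| * H) := by ring
      _ ≤ 2 * (t^2 * V) * (1/100) := mul_le_mul_of_nonneg_left htH (by linarith)
      _ = (1/50) * (t^2 * V) := by ring
  have hub2 : 2 * V * (2*t) ^ 2 * (|2*t| * H) ≤ (4/25) * (t^2 * V) := by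
    rw [abs_mul, abs_two]
    calc 2 * V * (2*t) ^ 2 * (2 * |t| * H) = 16 * (t^2 * V) * (|t| * H) := by ring
      _ ≤ 16 * (t^2 * V) * (1/100) := mul_le_mul_of_nonneg_left htH (by linarith)
      _ = (4/25) * (t^2 * V) := by ring
  have hc2 : (1:ℝ) + (2*t)^2 * V / 2 = 1 + 2 * (t^2 * V) := by ring
  rw [hc2] at hB2
  have hB1' : |A - (1 + t ^ 2 * V / 2)| ≤ (1/50) * (t^2 * V) := le_trans hB1 hub1
  have hB2' : |B - (1 + 2 * (t^2 * V))| ≤ (4/25) * (t^2 * V) := le_trans hB2 hub2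
  obtain ⟨l1, r1⟩ := abs_le.mp hB1'
  obtain ⟨l2, r2⟩ := abs_le.mp hB2'
  set w := t^2 * V with hw
  have hA_up : A ≤ 1 + (13/25) * w := by linarith
  have hA0 : (0:ℝ) ≤ A := by nlinarith
  have hsqA : A^2 ≤ (1 + (13/25) * w)^2 := by nlinarith
  have hB_lo : 1 + (46/25) * w ≤ B := by linarith
  have hfac : (0:ℝ) < 1 - w/4 := by linarith
  have h5 : (1 + (46/25) * w) * (1 - w/4) ≤ B * (1 - w/4) :=
    mul_le_mul_of_nonneg_right hB_lo hfac.le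
  have h6 : (1 + (13/25) * w)^2 ≤ (1 + (46/25) * w) * (1 - w/4) := by
    nlinarith [mul_le_mul_of_nonneg_left hwle hw0]
  have core : A^2 ≤ B * (1 - w/4) := by linarith
  have hexp2 : Real.exp (2*t*𝔞) = Real.exp (t*𝔞)^2 := by
    rw [pow_two, ← Real.exp_add]
    congr 1
    ring
  calc (Real.exp (t * 𝔞) * A)^2 = Real.exp (t*𝔞)^2 * A^2 := by ring
    _ ≤ Real.exp (t*𝔞)^2 * (B * (1 - w/4)) :=
        mul_le_mul_of_nonneg_left core (sq_nonneg _)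
    _ = Real.exp (2*t*𝔞) * B * (1 - w/4) := by rw [hexp2]; ring
end

section
/- Let η₁,…,η_N be independent real random variables, each with finite mean and variance σ_k² = Var(η_k) > 0, and suppose there is H > 0 such that for every k and every integer n ≥ 2, |E[(η_k − E[η_k])ⁿ]| ≤ n! σ_k² H^{n−2}. Set L = η₁ + ⋯ + η_N. Then there is an absolute constant c > 0 such that for every real t with |t| ≤ c min(H^{−1}, min_k σ_k^{−1}), (E[e^{tL}])² ≤ E[e^{2tL}] · ∏_{k=1}^{N} (1 − t²σ_k²/4). -/
open MeasureTheory ProbabilityTheory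

set_option maxHeartbeats 1000000 in
private lemma keyA {Ω : Type} [MeasureSpace Ω] [IsProbabilityMeasure (ℙ : Measure Ω)]
    {X : Ω → ℝ} (hXm : Measurable X) (hX1 : Integrable X ℙ) (hX0 : (∫ ω, X ω) = 0)
    {H V : ℝ} (hH : 0 < H) (hV0 : 0 ≤ V) (hV : (∫ ω, (X ω)^2) = V)
    (hintn : ∀ n : ℕ, 2 ≤ n → Integrable (fun ω => (X ω)^n) ℙ)
    (hmom : ∀ n : ℕ, 2 ≤ n → |∫ ω, (X ω)^n| ≤ (n.factorial : ℝ) * V * H^(n-2))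
    {s : ℝ} (hs : |s| * H ≤ 1/2) :
    Integrable (fun ω => Real.exp (s * X ω)) ℙ ∧
      |(∫ ω, Real.exp (s * X ω)) - (1 + s^2 * V / 2)| ≤ 2 * V * |s|^3 * H := by
  set r : ℝ := |s| * H with hrdef
  have hr0 : 0 ≤ r := mul_nonneg (abs_nonneg s) hH.le
  have hr1 : r < 1 := lt_of_le_of_lt hs (by norm_num)
  set F : ℕ → Ω → ℝ := fun n ω => (s * X ω)^n / (n.factorial : ℝ) with hFdef
  have hFmeas : ∀ n, Measurable (F n) := fun n => ((hXm.const_mul s).pow_const n).div_const _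
  have hFint : ∀ n, Integrable (F n) ℙ := by
    intro n
    match n with
    | 0 => simpa [F] using integrable_const (1 : ℝ)
    | 1 =>
      have : F 1 = fun ω => s * X ω := by funext ω; simp [F]
      rw [this]; exact hX1.const_mul s
    | (n+2) =>
      have : F (n+2) = fun ω => (s^(n+2) / ((n+2).factorial : ℝ)) * (X ω)^(n+2) := by
        funext ω; simp only [F, mul_pow]; ring
      rw [this]; exact (hintn (n+2) (by omega)).const_mul _
  have hHsum : H^1 ≤ 1 + H^2 := by nlinarith [sq_nonneg (H - 1)]
  -- absolute moment bounds
  have hAbs : ∀ m : ℕ, Integrable (fun ω => |X ω|^(m+3)) ℙ ∧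
      (∫ ω, |X ω|^(m+3)) ≤ ((m+4).factorial : ℝ) * V * (H^m + H^(m+2)) := by
    intro m
    have hfacle : ((m+3).factorial : ℝ) ≤ ((m+4).factorial : ℝ) := by
      exact_mod_cast Nat.factorial_le (by omega)
    have hHm : (0:ℝ) ≤ H^m := pow_nonneg hH.le m
    have hHm2 : (0:ℝ) ≤ H^(m+2) := pow_nonneg hH.le (m+2)
    rcases Nat.even_or_odd (m+3) with he | ho
    · have habs : (fun ω => |X ω|^(m+3)) = fun ω => (X ω)^(m+3) :=
        funext fun ω => he.pow_abs (X ω)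
      constructor
      · rw [habs]; exact hintn _ (by omega)
      · rw [habs]
        have h1 := (le_abs_self _).trans (hmom (m+3) (by omega))
        have h2 : m + 3 - 2 = m + 1 := by omega
        rw [h2] at h1
        have h3 : H^(m+1) ≤ H^m + H^(m+2) := by
          have e1 : H^(m+1) = H^m * H^1 := by rw [← pow_add]
          have e2 : H^(m+2) = H^m * H^2 := by rw [← pow_add]
          rw [e1, e2]
          nlinarith [hHm]
        calc (∫ ω, (X ω)^(m+3)) ≤ ((m+3).factorial : ℝ) * V * H^(m+1) := h1
          _ ≤ ((m+4).factorial : ℝ) * V * (H^m + H^(m+2)) := by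
            have : (0:ℝ) ≤ ((m+3).factorial : ℝ) := by positivity
            nlinarith [mul_nonneg hV0 hHm, mul_nonneg hV0 hHm2,
              mul_nonneg (mul_nonneg this hV0) (by linarith : (0:ℝ) ≤ H^m + H^(m+2) - H^(m+1))]
    · -- odd case
      obtain ⟨j, hj⟩ := ho
      have hm2 : Even (m+2) := ⟨j, by omega⟩
      have hm4 : Even (m+4) := ⟨j+1, by omega⟩
      have hpt : ∀ ω, |X ω|^(m+3) ≤ (X ω)^(m+2) + (X ω)^(m+4) := by
        intro ω
        have e2 : (X ω)^(m+2) = |X ω|^(m+2) := (hm2.pow_abs (X ω)).symm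
        have e4 : (X ω)^(m+4) = |X ω|^(m+4) := (hm4.pow_abs (X ω)).symm
        rw [e2, e4]
        rcases le_total (|X ω|) 1 with h | h
        · have := pow_le_pow_of_le_one (abs_nonneg _) h (by omega : m+2 ≤ m+3)
          have h4 : (0:ℝ) ≤ |X ω|^(m+4) := by positivity
          linarith
        · have := pow_le_pow_right₀ h (by omega : m+3 ≤ m+4)
          have h2 : (0:ℝ) ≤ |X ω|^(m+2) := by positivity
          linarith
      have hgint : Integrable (fun ω => (X ω)^(m+2) + (X ω)^(m+4)) ℙ :=
        (hintn (m+2) (by omega)).add (hintn (m+4) (by omega))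
      have habsint : Integrable (fun ω => |X ω|^(m+3)) ℙ := by
        refine Integrable.mono' hgint ((hXm.abs.pow_const _).aestronglyMeasurable)
          (ae_of_all _ fun ω => ?_)
        rw [Real.norm_eq_abs, abs_of_nonneg (by positivity)]
        exact hpt ω
      refine ⟨habsint, ?_⟩
      have h2 := (le_abs_self _).trans (hmom (m+2) (by omega))
      have h4 := (le_abs_self _).trans (hmom (m+4) (by omega))
      have e2 : m + 2 - 2 = m := by omega
      have e4 : m + 4 - 2 = m + 2 := by omega
      rw [e2] at h2; rw [e4] at h4
      have hfacle2 : ((m+2).factorial : ℝ) ≤ ((m+4).factorial : ℝ) := by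
        exact_mod_cast Nat.factorial_le (by omega)
      calc (∫ ω, |X ω|^(m+3))
          ≤ ∫ ω, ((X ω)^(m+2) + (X ω)^(m+4)) := integral_mono habsint hgint hpt
        _ = (∫ ω, (X ω)^(m+2)) + ∫ ω, (X ω)^(m+4) :=
            integral_add (hintn (m+2) (by omega)) (hintn (m+4) (by omega))
        _ ≤ ((m+2).factorial : ℝ) * V * H^m + ((m+4).factorial : ℝ) * V * H^(m+2) := by
            linarith
        _ ≤ ((m+4).factorial : ℝ) * V * (H^m + H^(m+2)) := by
            nlinarith [mul_nonneg hV0 hHm]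
  have hnormF : ∀ n ω, ‖F n ω‖ = |s * X ω|^n / (n.factorial : ℝ) := by
    intro n ω
    rw [Real.norm_eq_abs]
    simp only [F]
    rw [abs_div, abs_pow, abs_of_nonneg (by positivity : (0:ℝ) ≤ (n.factorial : ℝ))]
  -- bound on integrals of norms
  have hc : ∀ m : ℕ, (∫ ω, ‖F (m+3) ω‖) ≤ (V * (1 + H^2) * |s|^3) * ((m+4) * r^m) := by
    intro m
    have heq : (fun ω => ‖F (m+3) ω‖)
        = fun ω => (|s|^(m+3) / ((m+3).factorial : ℝ)) * |X ω|^(m+3) := by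
      funext ω
      rw [hnormF, abs_mul, mul_pow]
      ring
    rw [heq, integral_const_mul]
    have hb := (hAbs m).2
    have hpos : (0:ℝ) ≤ |s|^(m+3) / ((m+3).factorial : ℝ) := by positivity
    calc (|s|^(m+3) / ((m+3).factorial : ℝ)) * ∫ ω, |X ω|^(m+3)
        ≤ (|s|^(m+3) / ((m+3).factorial : ℝ)) * (((m+4).factorial : ℝ) * V * (H^m + H^(m+2))) :=
          mul_le_mul_of_nonneg_left hb hpos
      _ = (V * (1 + H^2) * |s|^3) * ((m+4) * r^m) := by
          have hfac : ((m+4).factorial : ℝ) = ((m:ℝ)+4) * ((m+3).factorial : ℝ) := by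
            have : (m+4).factorial = (m+4) * (m+3).factorial := Nat.factorial_succ (m+3)
            rw [this]; push_cast; ring
          have hfne : ((m+3).factorial : ℝ) ≠ 0 := by positivity
          rw [hfac, hrdef, mul_pow]
          field_simp
          ring
  have hcsum : Summable (fun n => ∫ ω, ‖F n ω‖) := by
    rw [← summable_nat_add_iff 3]
    refine Summable.of_nonneg_of_le (fun m => integral_nonneg fun ω => norm_nonneg _) hc ?_
    apply Summable.mul_left
    have h1 : Summable (fun m : ℕ => (m : ℝ)^1 * r^m) :=
      summable_pow_mul_geometric_of_norm_lt_one 1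
        (by rwa [Real.norm_eq_abs, abs_of_nonneg hr0])
    have h2 : Summable (fun m : ℕ => 4 * r^m) :=
      (summable_geometric_of_lt_one hr0 hr1).mul_left 4
    refine (h1.add h2).congr fun m => ?_
    push_cast; ring
  -- the sum formula
  have hHasSum : HasSum (fun n => ∫ ω, F n ω) (∫ ω, Real.exp (s * X ω)) := by
    have h := hasSum_integral_of_summable_integral_norm (μ := ℙ) hFint hcsum
    have hpt : ∀ ω, (∑' n, F n ω) = Real.exp (s * X ω) := by
      intro ω
      rw [Real.exp_eq_exp_ℝ]
      exact (NormedSpace.expSeries_div_hasSum_exp (s * X ω)).tsum_eq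
    simpa only [hpt] using h
  -- integrability of exp
  have hint_exp : Integrable (fun ω => Real.exp (s * X ω)) ℙ := by
    refine ⟨((hXm.const_mul s).exp).aestronglyMeasurable, ?_⟩
    rw [hasFiniteIntegral_iff_ofReal (ae_of_all _ fun ω => Real.exp_nonneg _)]
    calc ∫⁻ ω, ENNReal.ofReal (Real.exp (s * X ω)) ∂ℙ
        ≤ ∫⁻ ω, ∑' n, ENNReal.ofReal ‖F n ω‖ ∂ℙ := by
          refine lintegral_mono fun ω => ?_
          have h1 : HasSum (fun n => ‖F n ω‖) (Real.exp |s * X ω|) := by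
            have h0 := NormedSpace.expSeries_div_hasSum_exp (|s * X ω|)
            rw [← Real.exp_eq_exp_ℝ] at h0
            simp only [hnormF]
            exact h0
          calc ENNReal.ofReal (Real.exp (s * X ω))
              ≤ ENNReal.ofReal (Real.exp |s * X ω|) :=
                ENNReal.ofReal_le_ofReal (Real.exp_le_exp.2 (le_abs_self _))
            _ = ENNReal.ofReal (∑' n, ‖F n ω‖) := by rw [h1.tsum_eq]
            _ = ∑' n, ENNReal.ofReal ‖F n ω‖ :=
                ENNReal.ofReal_tsum_of_nonneg (fun n => norm_nonneg _) h1.summable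
      _ = ∑' n, ∫⁻ ω, ENNReal.ofReal ‖F n ω‖ ∂ℙ :=
          lintegral_tsum fun n => ((hFmeas n).norm.ennreal_ofReal).aemeasurable
      _ = ∑' n, ENNReal.ofReal (∫ ω, ‖F n ω‖ ∂ℙ) := by
          congr 1; funext n
          rw [← ofReal_integral_eq_lintegral_ofReal (hFint n).norm
            (ae_of_all _ fun ω => norm_nonneg _)]
      _ = ENNReal.ofReal (∑' n, ∫ ω, ‖F n ω‖ ∂ℙ) :=
          (ENNReal.ofReal_tsum_of_nonneg (fun n => integral_nonneg fun ω => norm_nonneg _)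
            hcsum).symm
      _ < ⊤ := ENNReal.ofReal_lt_top
  refine ⟨hint_exp, ?_⟩
  -- low-order terms
  have I0 : (∫ ω, F 0 ω) = 1 := by
    simp [F]
  have I1 : (∫ ω, F 1 ω) = 0 := by
    have : (fun ω => F 1 ω) = fun ω => s * X ω := by funext ω; simp [F]
    rw [this, integral_const_mul, hX0, mul_zero]
  have I2 : (∫ ω, F 2 ω) = s^2 * V / 2 := by
    have : (fun ω => F 2 ω) = fun ω => (s^2/2) * (X ω)^2 := by
      funext ω; simp only [F, Nat.factorial]; push_cast; ring
    rw [this, integral_const_mul, hV]; ring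
  have h3 : HasSum (fun m => ∫ ω, F (m+3) ω)
      ((∫ ω, Real.exp (s * X ω)) - (1 + s^2 * V / 2)) := by
    refine (hasSum_nat_add_iff (f := fun n => ∫ ω, F n ω) 3).mpr ?_
    have hS : (∑ i ∈ Finset.range 3, ∫ ω, F i ω) = 1 + s^2 * V / 2 := by
      rw [Finset.sum_range_succ, Finset.sum_range_succ, Finset.sum_range_one, I0, I1, I2]
      ring
    rw [hS, sub_add_cancel]
    exact hHasSum
  have hIb : ∀ m : ℕ, |∫ ω, F (m+3) ω| ≤ (V * |s|^3 * H) * r^m := by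
    intro m
    have heq : (∫ ω, F (m+3) ω) = (s^(m+3) / ((m+3).factorial : ℝ)) * ∫ ω, (X ω)^(m+3) := by
      rw [← integral_const_mul]
      congr 1; funext ω; simp only [F, mul_pow]; ring
    rw [heq, abs_mul, abs_div, abs_pow,
      abs_of_nonneg (by positivity : (0:ℝ) ≤ ((m+3).factorial : ℝ))]
    have hb := hmom (m+3) (by omega)
    have e1 : m + 3 - 2 = m + 1 := by omega
    rw [e1] at hb
    have hpos : (0:ℝ) ≤ |s|^(m+3) / ((m+3).factorial : ℝ) := by positivity
    calc (|s|^(m+3) / ((m+3).factorial : ℝ)) * |∫ ω, (X ω)^(m+3)|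
        ≤ (|s|^(m+3) / ((m+3).factorial : ℝ)) * (((m+3).factorial : ℝ) * V * H^(m+1)) :=
          mul_le_mul_of_nonneg_left hb hpos
      _ = (V * |s|^3 * H) * r^m := by
          have hfne : ((m+3).factorial : ℝ) ≠ 0 := by positivity
          rw [hrdef, mul_pow]
          field_simp
          ring
  have hgsum : Summable (fun m : ℕ => (V * |s|^3 * H) * r^m) :=
    (summable_geometric_of_lt_one hr0 hr1).mul_left _
  have habssum : Summable (fun m => |∫ ω, F (m+3) ω|) :=
    Summable.of_nonneg_of_le (fun m => abs_nonneg _) hIb hgsum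
  have hfinal : |(∫ ω, Real.exp (s * X ω)) - (1 + s^2 * V / 2)| ≤ (V * |s|^3 * H) * (1 - r)⁻¹ := by
    rw [← h3.tsum_eq]
    calc |∑' m, ∫ ω, F (m+3) ω| ≤ ∑' m, |∫ ω, F (m+3) ω| := by
          have hn := norm_tsum_le_tsum_norm (f := fun m => ∫ ω, F (m+3) ω)
            (by simpa only [Real.norm_eq_abs] using habssum)
          simpa only [Real.norm_eq_abs] using hn
      _ ≤ ∑' m : ℕ, (V * |s|^3 * H) * r^m := Summable.tsum_le_tsum hIb habssum hgsum
      _ = (V * |s|^3 * H) * (1 - r)⁻¹ := by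
          rw [tsum_mul_left, tsum_geometric_of_lt_one hr0 hr1]
  refine hfinal.trans ?_
  have hinv : (1 - r)⁻¹ ≤ 2 := by
    rw [show (2:ℝ) = (1/2 : ℝ)⁻¹ by norm_num]
    apply inv_anti₀ <;> linarith
  have hnn : (0:ℝ) ≤ V * |s|^3 * H := by positivity
  nlinarith [mul_le_mul_of_nonneg_left hinv hnn]
private lemma keyB {Ω : Type} [MeasureSpace Ω] [IsProbabilityMeasure (ℙ : Measure Ω)]
    {X : Ω → ℝ} (hXm : Measurable X) (hX1 : Integrable X ℙ) (hX0 : (∫ ω, X ω) = 0)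
    {H V : ℝ} (hH : 0 < H) (hV0 : 0 ≤ V) (hV : (∫ ω, (X ω)^2) = V)
    (hintn : ∀ n : ℕ, 2 ≤ n → Integrable (fun ω => (X ω)^n) ℙ)
    (hmom : ∀ n : ℕ, 2 ≤ n → |∫ ω, (X ω)^n| ≤ (n.factorial : ℝ) * V * H^(n-2))
    {t : ℝ} (ht1 : |t| * H ≤ 1/40) (ht2 : t^2 * V ≤ 1/1600) :
    Integrable (fun ω => Real.exp (t * X ω)) ℙ ∧
    Integrable (fun ω => Real.exp (2 * t * X ω)) ℙ ∧
    (∫ ω, Real.exp (t * X ω))^2 ≤ (∫ ω, Real.exp (2 * t * X ω)) * (1 - t^2 * V / 4) := by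
  obtain ⟨hi1, he1⟩ := keyA hXm hX1 hX0 hH hV0 hV hintn hmom (s := t) (by linarith)
  obtain ⟨hi2, he2⟩ := keyA hXm hX1 hX0 hH hV0 hV hintn hmom (s := 2 * t)
    (by rw [abs_mul, abs_two]; linarith)
  refine ⟨hi1, hi2, ?_⟩
  set m1 : ℝ := ∫ ω, Real.exp (t * X ω) with hm1
  set m2 : ℝ := ∫ ω, Real.exp (2 * t * X ω) with hm2
  set v : ℝ := t^2 * V with hvdef
  set w : ℝ := V * |t|^3 * H with hwdef
  have hv0 : 0 ≤ v := by rw [hvdef]; positivity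
  have hw0 : 0 ≤ w := by rw [hwdef]; positivity
  have hwv : w ≤ v / 40 := by
    have : w = v * (|t| * H) := by
      rw [hwdef, hvdef]
      have : t^2 = |t|^2 := (sq_abs t).symm
      rw [this]; ring
    rw [this]
    calc v * (|t| * H) ≤ v * (1/40) := by
          apply mul_le_mul_of_nonneg_left ht1 hv0
      _ = v / 40 := by ring
  have hm1nn : 0 ≤ m1 := integral_nonneg fun ω => (Real.exp_nonneg _)
  have ha1 : m1 ≤ 1 + v/2 + 2*w := by
    have := (abs_le.1 he1).2
    have hev : (1 : ℝ) + t^2 * V / 2 = 1 + v/2 := by rw [hvdef]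
    nlinarith [this]
  have ha2 : 1 + 2*v - 16*w ≤ m2 := by
    have h := (abs_le.1 he2).1
    have e1 : (2*t)^2 * V / 2 = 2 * v := by rw [hvdef]; ring
    have e2 : 2 * V * |2*t|^3 * H = 16 * w := by
      rw [hwdef, abs_mul, abs_two]; ring
    rw [e1, e2] at h
    linarith
  have hv14 : (0:ℝ) ≤ 1 - v/4 := by linarith [ht2]
  have hb1 : m1^2 ≤ (1 + v/2 + 2*w)^2 := by nlinarith [hm1nn, ha1]
  have hb3 : (1 + v/2 + 2*w)^2 ≤ (1 + 2*v - 16*w) * (1 - v/4) := by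
    nlinarith [hv0, hw0, hwv, ht2, sq_nonneg w, sq_nonneg v, mul_nonneg hv0 hw0,
      mul_nonneg hv0 hv0, mul_le_mul_of_nonneg_left ht2 hv0,
      mul_le_mul_of_nonneg_left hwv hw0]
  have hb2 : (1 + 2*v - 16*w) * (1 - v/4) ≤ m2 * (1 - v/4) :=
    mul_le_mul_of_nonneg_right ha2 hv14
  calc m1^2 ≤ (1 + v/2 + 2*w)^2 := hb1
    _ ≤ (1 + 2*v - 16*w) * (1 - v/4) := hb3
    _ ≤ m2 * (1 - v/4) := hb2
    _ = m2 * (1 - t^2 * V / 4) := by rw [hvdef]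
set_option maxHeartbeats 1000000 in
/-- Exponential-moment comparison for sums of independent variables satisfying a
Bernstein-type moment condition: with `L = η₁ + ⋯ + η_N`, for
`|t| ≤ c min(H⁻¹, min_k σ_k⁻¹)` (with an absolute constant `c > 0`) one has
`(E[e^{tL}])² ≤ E[e^{2tL}] ∏_k (1 - t²σ_k²/4)`. -/
theorem statement19 :
    ∃ c : ℝ, 0 < c ∧
      ∀ (Ω : Type) [MeasureSpace Ω], IsProbabilityMeasure (ℙ : Measure Ω) →
      ∀ (N : ℕ) (η : Fin N → Ω → ℝ) (H : ℝ), 0 < H →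
        (∀ k, Measurable (η k)) →
        iIndepFun η ℙ →
        (∀ k, Integrable (η k) ℙ) →
        (∀ k, 0 < variance (η k) ℙ) →
        (∀ k, ∀ n : ℕ, 2 ≤ n →
          Integrable (fun ω => (η k ω - ∫ ω', η k ω') ^ n) ℙ) →
        (∀ k, ∀ n : ℕ, 2 ≤ n →
          |∫ ω, (η k ω - ∫ ω', η k ω') ^ n|
            ≤ (n.factorial : ℝ) * variance (η k) ℙ * H ^ (n - 2)) →
        ∀ t : ℝ, |t| ≤ c * H⁻¹ →
          (∀ k, |t| ≤ c * (Real.sqrt (variance (η k) ℙ))⁻¹) →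
          Integrable (fun ω => Real.exp (t * ∑ k, η k ω)) ℙ ∧
          Integrable (fun ω => Real.exp (2 * t * ∑ k, η k ω)) ℙ ∧
          (∫ ω, Real.exp (t * ∑ k, η k ω)) ^ 2
            ≤ (∫ ω, Real.exp (2 * t * ∑ k, η k ω))
                * ∏ k, (1 - t ^ 2 * variance (η k) ℙ / 4) := by
  refine ⟨1/40, by norm_num, ?_⟩
  intro Ω _ hP N η H hH hmeas hindep hint1 hvar hintn hmom t htH htσ
  have hprob : IsProbabilityMeasure (ℙ : Measure Ω) := hP
  set V : Fin N → ℝ := fun k => variance (η k) ℙ with hVdef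
  set μc : Fin N → ℝ := fun k => ∫ ω, η k ω with hmudef
  set X : Fin N → Ω → ℝ := fun k ω => η k ω - μc k with hXdef
  have hXmeas : ∀ k, Measurable (X k) := fun k => (hmeas k).sub measurable_const
  have hXint : ∀ k, Integrable (X k) ℙ := fun k => (hint1 k).sub (integrable_const _)
  have hX0 : ∀ k, (∫ ω, X k ω) = 0 := by
    intro k
    simp only [X]
    rw [integral_sub (hint1 k) (integrable_const _), integral_const, probReal_univ]
    simp [μc]
  have hXintn : ∀ k, ∀ n : ℕ, 2 ≤ n → Integrable (fun ω => (X k ω)^n) ℙ := fun k n hn =>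
    hintn k n hn
  have hVarX : ∀ k, (∫ ω, (X k ω)^2) = V k := by
    intro k
    have hℒ2 : MemLp (X k) 2 ℙ := by
      refine (memLp_two_iff_integrable_sq (hXmeas k).aestronglyMeasurable).2 ?_
      exact hXintn k 2 le_rfl
    have hℒ2' : MemLp (η k) 2 ℙ := by
      have h := hℒ2.add (memLp_const (μc k))
      have : η k = X k + fun _ => μc k := by funext ω; simp [X]
      rwa [← this] at h
    have := variance_eq_integral (μ := ℙ) (hmeas k).aemeasurable
    simp only [hVdef]
    rw [this]
  have hXmom : ∀ k, ∀ n : ℕ, 2 ≤ n →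
      |∫ ω, (X k ω)^n| ≤ (n.factorial : ℝ) * V k * H^(n-2) := fun k n hn => hmom k n hn
  have hV0 : ∀ k, 0 ≤ V k := fun k => (hvar k).le
  have ht1 : |t| * H ≤ 1/40 := by
    have h := mul_le_mul_of_nonneg_right htH hH.le
    rwa [mul_assoc, inv_mul_cancel₀ hH.ne', mul_one] at h
  have ht2 : ∀ k, t^2 * V k ≤ 1/1600 := by
    intro k
    have hs : 0 < Real.sqrt (V k) := Real.sqrt_pos.2 (hvar k)
    have h := mul_le_mul_of_nonneg_right (htσ k) hs.le
    rw [mul_assoc, inv_mul_cancel₀ hs.ne', mul_one] at h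
    have h2 : (|t| * Real.sqrt (V k))^2 ≤ (1/40)^2 := by
      apply pow_le_pow_left₀ (by positivity) h
    calc t^2 * V k = (|t| * Real.sqrt (V k))^2 := by
          rw [mul_pow, sq_abs, Real.sq_sqrt (hV0 k)]
      _ ≤ (1/40)^2 := h2
      _ = 1/1600 := by norm_num
  have hkey : ∀ k, Integrable (fun ω => Real.exp (t * X k ω)) ℙ ∧
      Integrable (fun ω => Real.exp (2 * t * X k ω)) ℙ ∧
      (∫ ω, Real.exp (t * X k ω))^2
        ≤ (∫ ω, Real.exp (2 * t * X k ω)) * (1 - t^2 * V k / 4) := fun k =>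
    keyB (hXmeas k) (hXint k) (hX0 k) hH (hV0 k) (hVarX k) (hXintn k) (hXmom k) ht1 (ht2 k)
  -- integrability of exponentials of each η k
  have hsplit : ∀ (u : ℝ) k, (fun ω => Real.exp (u * η k ω))
      = fun ω => Real.exp (u * μc k) * Real.exp (u * X k ω) := by
    intro u k; funext ω
    rw [← Real.exp_add]
    congr 1
    simp [X]; ring
  have hIexp1 : ∀ k, Integrable (fun ω => Real.exp (t * η k ω)) ℙ := by
    intro k; rw [hsplit t k]; exact ((hkey k).1).const_mul _
  have hIexp2 : ∀ k, Integrable (fun ω => Real.exp (2 * t * η k ω)) ℙ := by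
    intro k; rw [hsplit (2*t) k]; exact ((hkey k).2.1).const_mul _
  have hsum1 : Integrable (fun ω => Real.exp (t * ∑ k, η k ω)) ℙ := by
    have h := hindep.integrable_exp_mul_sum (t := t) hmeas (s := Finset.univ)
      (fun k _ => hIexp1 k)
    simpa [Finset.sum_apply] using h
  have hsum2 : Integrable (fun ω => Real.exp (2 * t * ∑ k, η k ω)) ℙ := by
    have h := hindep.integrable_exp_mul_sum (t := 2*t) hmeas (s := Finset.univ)
      (fun k _ => hIexp2 k)
    simpa [Finset.sum_apply] using h
  refine ⟨hsum1, hsum2, ?_⟩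
  -- mgf identities
  have hm1 : (∫ ω, Real.exp (t * ∑ k, η k ω)) = ∏ k, mgf (η k) ℙ t := by
    have h := hindep.mgf_sum hmeas Finset.univ (t := t)
    rw [← h]
    simp [mgf, Finset.sum_apply]
  have hm2 : (∫ ω, Real.exp (2 * t * ∑ k, η k ω)) = ∏ k, mgf (η k) ℙ (2*t) := by
    have h := hindep.mgf_sum hmeas Finset.univ (t := 2*t)
    rw [← h]
    simp [mgf, Finset.sum_apply]
  -- per-factor inequality for mgf of η k
  have hfac : ∀ k, (mgf (η k) ℙ t)^2 ≤ mgf (η k) ℙ (2*t) * (1 - t^2 * V k / 4) := by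
    intro k
    have e1 : mgf (η k) ℙ t = Real.exp (t * μc k) * ∫ ω, Real.exp (t * X k ω) := by
      rw [mgf, ← integral_const_mul]
      exact congrArg (fun f => ∫ ω, f ω) (hsplit t k)
    have e2 : mgf (η k) ℙ (2*t) = Real.exp (2*t * μc k) * ∫ ω, Real.exp (2 * t * X k ω) := by
      rw [mgf, ← integral_const_mul]
      exact congrArg (fun f => ∫ ω, f ω) (hsplit (2*t) k)
    rw [e1, e2]
    have h := (hkey k).2.2
    have hexp2 : Real.exp (t * μc k) ^ 2 = Real.exp (2 * t * μc k) := by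
      rw [sq, ← Real.exp_add]; ring_nf
    calc (Real.exp (t * μc k) * ∫ ω, Real.exp (t * X k ω))^2
        = Real.exp (2 * t * μc k) * (∫ ω, Real.exp (t * X k ω))^2 := by
          rw [mul_pow, hexp2]
      _ ≤ Real.exp (2 * t * μc k)
            * ((∫ ω, Real.exp (2 * t * X k ω)) * (1 - t^2 * V k / 4)) :=
          mul_le_mul_of_nonneg_left h (Real.exp_nonneg _)
      _ = Real.exp (2*t * μc k) * (∫ ω, Real.exp (2 * t * X k ω)) * (1 - t^2 * V k / 4) := by
          ring
  calc (∫ ω, Real.exp (t * ∑ k, η k ω))^2 = ∏ k, (mgf (η k) ℙ t)^2 := by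
        rw [hm1, ← Finset.prod_pow]
    _ ≤ ∏ k, (mgf (η k) ℙ (2*t) * (1 - t^2 * V k / 4)) :=
        Finset.prod_le_prod (fun k _ => sq_nonneg _) (fun k _ => hfac k)
    _ = (∏ k, mgf (η k) ℙ (2*t)) * ∏ k, (1 - t^2 * V k / 4) := Finset.prod_mul_distrib
    _ = (∫ ω, Real.exp (2 * t * ∑ k, η k ω)) * ∏ k, (1 - t^2 * V k / 4) := by rw [hm2]
end
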